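/- Suppose r̄ ≥ (3/2) r_D, τ₃ κ² r_D < 4/9 and τ₄ κ² r_D² < 1/3. Then |E[‖Q φ‖ 1_S] − E[‖Q F^{-1} ξ‖ 1_S]| ≤ ‖Q F^{-1} D‖ · (τ₃/2) · 𝔞_D. -/

import Mathlib

open MeasureTheory RealInnerProductSpace

/-- Application of a matrix to a vector in Euclidean space. -/
noncomputable def mApp {p q : ℕ} (M : Matrix (Fin q) (Fin p) ℝ)
    (v : EuclideanSpace ℝ (Fin p)) : EuclideanSpace ℝ (Fin q) :=
  Matrix.toEuclideanLin M v

/-- Operator norm of (the Euclidean linear map induced by) a matrix. -/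
noncomputable def mopNorm {p q : ℕ} (M : Matrix (Fin q) (Fin p) ℝ) : ℝ :=
  ‖(LinearMap.toContinuousLinearMap (Matrix.toEuclideanLin M))‖


section Helpers
open Matrix

lemma mApp_mul {p q r : ℕ} (A : Matrix (Fin q) (Fin r) ℝ) (B : Matrix (Fin r) (Fin p) ℝ)
    (v : EuclideanSpace ℝ (Fin p)) : mApp (A * B) v = mApp A (mApp B v) := by
  simp [mApp, Matrix.toEuclideanLin_apply, Matrix.mulVec_mulVec]

lemma mApp_one {p : ℕ} (v : EuclideanSpace ℝ (Fin p)) : mApp 1 v = v := by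
  simp [mApp, Matrix.toEuclideanLin_apply, Matrix.one_mulVec]

lemma mApp_add {p q : ℕ} (M : Matrix (Fin q) (Fin p) ℝ) (a b : EuclideanSpace ℝ (Fin p)) :
    mApp M (a + b) = mApp M a + mApp M b := map_add _ _ _

lemma mApp_cont {p q : ℕ} (M : Matrix (Fin q) (Fin p) ℝ) : Continuous (mApp M) :=
  (LinearMap.toContinuousLinearMap (Matrix.toEuclideanLin M)).continuous

lemma mApp_norm_le {p q : ℕ} (M : Matrix (Fin q) (Fin p) ℝ) (v : EuclideanSpace ℝ (Fin p)) :
    ‖mApp M v‖ ≤ mopNorm M * ‖v‖ :=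
  (LinearMap.toContinuousLinearMap (Matrix.toEuclideanLin M)).le_opNorm v

lemma mApp_symm_inner {p : ℕ} (M : Matrix (Fin p) (Fin p) ℝ) (hM : Mᵀ = M)
    (x y : EuclideanSpace ℝ (Fin p)) : ⟪mApp M x, y⟫ = ⟪x, mApp M y⟫ := by
  have h : Matrix.toEuclideanLin Mᴴ = LinearMap.adjoint (Matrix.toEuclideanLin M) :=
    Matrix.toEuclideanLin_conjTranspose_eq_adjoint M
  have hMH : Mᴴ = M := by rw [Matrix.conjTranspose_eq_transpose_of_trivial, hM]
  rw [hMH] at h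
  simp only [mApp]
  nth_rewrite 1 [h]
  rw [LinearMap.adjoint_inner_left]

lemma key_bound {p q : ℕ} (Qm : Matrix (Fin q) (Fin p) ℝ) (Fm D : Matrix (Fin p) (Fin p) ℝ)
    (hD : D.PosDef) (g : EuclideanSpace ℝ (Fin p)) (c : ℝ) (hc : 0 ≤ c)
    (hg : ∀ w, |⟪g, w⟫| ≤ c * ‖mApp D w‖) :
    ‖mApp Qm (mApp Fm g)‖ ≤ mopNorm (Qm * Fm * D) * c := by
  have hdet : IsUnit D.det := (Matrix.isUnit_iff_isUnit_det D).1 hD.isUnit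
  have hDT : Dᵀ = D := by
    have := hD.isHermitian
    rwa [Matrix.IsHermitian, Matrix.conjTranspose_eq_transpose_of_trivial] at this
  have hDinvT : (D⁻¹)ᵀ = D⁻¹ := by rw [Matrix.transpose_nonsing_inv, hDT]
  set x := mApp D⁻¹ g with hx
  have hDDinv : ∀ v : EuclideanSpace ℝ (Fin p), mApp D (mApp D⁻¹ v) = v := by
    intro v
    rw [← mApp_mul, Matrix.mul_nonsing_inv D hdet, mApp_one]
  have h1 : mApp Qm (mApp Fm g) = mApp (Qm * Fm * D) x := by
    rw [hx, ← mApp_mul, ← mApp_mul, Matrix.mul_assoc (Qm * Fm) D D⁻¹, Matrix.mul_nonsing_inv D hdet, Matrix.mul_one]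
  have hxle : ‖x‖ ≤ c := by
    have hsq : ‖x‖ ^ 2 ≤ c * ‖x‖ := by
      have e1 : ‖x‖ ^ 2 = ⟪x, x⟫ := (real_inner_self_eq_norm_sq x).symm
      have e2 : ⟪x, x⟫ = ⟪g, mApp D⁻¹ x⟫ := by
        rw [hx, mApp_symm_inner D⁻¹ hDinvT g x]
      have e3 : ⟪g, mApp D⁻¹ x⟫ ≤ c * ‖mApp D (mApp D⁻¹ x)‖ :=
        le_trans (le_abs_self _) (hg _)
      rw [hDDinv] at e3
      linarith [e1, e2.le, e3]
    nlinarith [norm_nonneg x]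
  calc ‖mApp Qm (mApp Fm g)‖ = ‖mApp (Qm * Fm * D) x‖ := by rw [h1]
    _ ≤ mopNorm (Qm * Fm * D) * ‖x‖ := mApp_norm_le _ _
    _ ≤ mopNorm (Qm * Fm * D) * c :=
        mul_le_mul_of_nonneg_left hxle (norm_nonneg _)

end Helpers

theorem phi_first_moment_comparison
    {p : ℕ} (hp : 1 ≤ p)
    (f : EuclideanSpace ℝ (Fin p) → ℝ)
    (hconv : ConvexOn ℝ Set.univ f)
    (hf : ContDiff ℝ 4 f)
    (υs : EuclideanSpace ℝ (Fin p))
    (hgrad : gradient f υs = 0)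
    (F : Matrix (Fin p) (Fin p) ℝ) (hF : F.PosDef)
    (hFdef : ∀ u w : EuclideanSpace ℝ (Fin p),
      iteratedFDeriv ℝ 2 f υs ![u, w] = ⟪mApp F u, w⟫)
    (D : Matrix (Fin p) (Fin p) ℝ) (hD : D.PosDef)
    (κ : ℝ) (hκ : 0 < κ)
    (hLoew : (κ ^ 2 • F - D * D).PosSemidef)
    (τ3 τ4 rb : ℝ) (hτ3 : 0 < τ3) (hτ4 : 0 < τ4) (hrb : 0 < rb)
    (hT3 : ∀ υ : EuclideanSpace ℝ (Fin p), ‖mApp D (υ - υs)‖ ≤ rb →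
      ∀ u w : EuclideanSpace ℝ (Fin p),
        |iteratedFDeriv ℝ 3 f υ ![u, u, w]| ≤ τ3 * ‖mApp D u‖ ^ 2 * ‖mApp D w‖)
    (hT4 : ∀ υ : EuclideanSpace ℝ (Fin p), ‖mApp D (υ - υs)‖ ≤ rb →
      ∀ u w : EuclideanSpace ℝ (Fin p),
        |iteratedFDeriv ℝ 4 f υ ![u, u, u, w]| ≤ τ4 * ‖mApp D u‖ ^ 3 * ‖mApp D w‖)
    (gT : EuclideanSpace ℝ (Fin p) → EuclideanSpace ℝ (Fin p))
    (hgT : ∀ u w : EuclideanSpace ℝ (Fin p),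
      ⟪gT u, w⟫ = 1 / 2 * iteratedFDeriv ℝ 3 f υs ![u, u, w])
    (rD : ℝ) (hrD : 0 < rD)
    {Ω : Type} [MeasurableSpace Ω] (P : Measure Ω) [IsProbabilityMeasure P]
    (ξ : Ω → EuclideanSpace ℝ (Fin p)) (hξm : Measurable ξ) (hξ2 : MemLp ξ 2 P)
    (S : Set Ω) (hS : MeasurableSet S)
    (hξD : ∀ ω ∈ S, ‖mApp D (mApp F⁻¹ (ξ ω))‖ ≤ rD)
    {q : ℕ} (Q : Matrix (Fin q) (Fin p) ℝ)
    (aD : ℝ) (haD : aD = ∫ ω, ‖mApp D (mApp F⁻¹ (ξ ω))‖ ^ 2 ∂P)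
    (h1 : rb ≥ 3 / 2 * rD) (h2 : τ3 * κ ^ 2 * rD < 4 / 9)
    (h3 : τ4 * κ ^ 2 * rD ^ 2 < 1 / 3)
    :
    |(∫ ω in S, ‖mApp Q (mApp F⁻¹ (ξ ω) + mApp F⁻¹ (gT (mApp F⁻¹ (ξ ω))))‖ ∂P) -
        ∫ ω in S, ‖mApp Q (mApp F⁻¹ (ξ ω))‖ ∂P| ≤
      mopNorm (Q * F⁻¹ * D) * (τ3 / 2) * aD := by
  -- continuity of gT
  have hgTc : Continuous gT := by
    have hco : ∀ cvec : EuclideanSpace ℝ (Fin p),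
        Continuous fun u : EuclideanSpace ℝ (Fin p) =>
          iteratedFDeriv ℝ 3 f υs ![u, u, cvec] := by
      intro cvec
      have h1 : Continuous fun u : EuclideanSpace ℝ (Fin p) =>
          (![u, u, cvec] : Fin 3 → EuclideanSpace ℝ (Fin p)) := by
        apply continuous_pi
        intro j
        fin_cases j <;> simp <;>
          first
          | exact continuous_id
          | exact continuous_const
      exact (iteratedFDeriv ℝ 3 f υs).cont.comp h1
    have hcoord : ∀ i : Fin p, Continuous fun u => gT u i := by
      intro i
      have he : (fun u => gT u i) =
          fun u => 1 / 2 * iteratedFDeriv ℝ 3 f υs ![u, u, EuclideanSpace.single i 1] := by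
        funext u
        have h := hgT u (EuclideanSpace.single i (1 : ℝ))
        have h2 : ⟪gT u, EuclideanSpace.single i (1 : ℝ)⟫ = gT u i := by
          rw [EuclideanSpace.inner_single_right]
          simp
        rw [← h2, h]
      rw [he]
      exact continuous_const.mul (hco _)
    have hpi : Continuous fun u => (fun i => gT u i : Fin p → ℝ) := continuous_pi hcoord
    exact (PiLp.continuous_toLp 2 (fun _ : Fin p => ℝ)).comp hpi
  -- pointwise bound for the correction term
  have hbound : ∀ v : EuclideanSpace ℝ (Fin p),
      ‖mApp Q (mApp F⁻¹ (gT v))‖ ≤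
        mopNorm (Q * F⁻¹ * D) * (τ3 / 2 * ‖mApp D v‖ ^ 2) := by
    intro v
    apply key_bound Q F⁻¹ D hD (gT v) (τ3 / 2 * ‖mApp D v‖ ^ 2) (by positivity)
    intro w
    rw [hgT v w]
    have h0 : ‖mApp D (υs - υs)‖ ≤ rb := by
      rw [sub_self, show mApp D 0 = 0 from map_zero _, norm_zero]
      exact hrb.le
    have hb := hT3 υs h0 v w
    have habs : |1 / 2 * iteratedFDeriv ℝ 3 f υs ![v, v, w]| =
        1 / 2 * |iteratedFDeriv ℝ 3 f υs ![v, v, w]| := by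
      rw [abs_mul]; norm_num
    rw [habs]
    nlinarith [norm_nonneg (mApp D w), norm_nonneg (mApp D v)]
  -- integrability facts
  have hmem : ∀ M : Matrix (Fin p) (Fin p) ℝ,
      MemLp (fun ω => mApp M (mApp F⁻¹ (ξ ω))) 2 P := by
    intro M
    have h := (LinearMap.toContinuousLinearMap
      (Matrix.toEuclideanLin (M * F⁻¹))).comp_memLp' hξ2
    have he : (fun ω => mApp M (mApp F⁻¹ (ξ ω))) =
        (LinearMap.toContinuousLinearMap (Matrix.toEuclideanLin (M * F⁻¹))) ∘ ξ := by
      funext ω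
      rw [← mApp_mul]
      rfl
    rw [he]
    exact h
  have hmemQ : MemLp (fun ω => mApp Q (mApp F⁻¹ (ξ ω))) 2 P := by
    have h := (LinearMap.toContinuousLinearMap
      (Matrix.toEuclideanLin (Q * F⁻¹))).comp_memLp' hξ2
    have he : (fun ω => mApp Q (mApp F⁻¹ (ξ ω))) =
        (LinearMap.toContinuousLinearMap (Matrix.toEuclideanLin (Q * F⁻¹))) ∘ ξ := by
      funext ω
      rw [← mApp_mul]
      rfl
    rw [he]
    exact h
  have hgint : Integrable (fun ω => ‖mApp D (mApp F⁻¹ (ξ ω))‖ ^ 2) P :=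
    ((hmem D).norm).integrable_sq
  have hBint : Integrable (fun ω => ‖mApp Q (mApp F⁻¹ (ξ ω))‖) P :=
    (memLp_one_iff_integrable.mp (hmemQ.mono_exponent (by norm_num))).norm
  set K := mopNorm (Q * F⁻¹ * D) * (τ3 / 2) with hK
  have hKnn : 0 ≤ K := mul_nonneg (norm_nonneg _) (by linarith)
  have hKgint : Integrable (fun ω => K * ‖mApp D (mApp F⁻¹ (ξ ω))‖ ^ 2) P :=
    hgint.const_mul K
  -- pointwise comparison
  have hptw : ∀ ω,
      |‖mApp Q (mApp F⁻¹ (ξ ω) + mApp F⁻¹ (gT (mApp F⁻¹ (ξ ω))))‖ -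
        ‖mApp Q (mApp F⁻¹ (ξ ω))‖| ≤ K * ‖mApp D (mApp F⁻¹ (ξ ω))‖ ^ 2 := by
    intro ω
    have h1 := abs_norm_sub_norm_le
      (mApp Q (mApp F⁻¹ (ξ ω) + mApp F⁻¹ (gT (mApp F⁻¹ (ξ ω)))))
      (mApp Q (mApp F⁻¹ (ξ ω)))
    have h2 : mApp Q (mApp F⁻¹ (ξ ω) + mApp F⁻¹ (gT (mApp F⁻¹ (ξ ω)))) -
        mApp Q (mApp F⁻¹ (ξ ω)) = mApp Q (mApp F⁻¹ (gT (mApp F⁻¹ (ξ ω)))) := by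
      rw [mApp_add]
      abel
    rw [h2] at h1
    refine h1.trans ?_
    have h3 := hbound (mApp F⁻¹ (ξ ω))
    calc ‖mApp Q (mApp F⁻¹ (gT (mApp F⁻¹ (ξ ω))))‖
        ≤ mopNorm (Q * F⁻¹ * D) * (τ3 / 2 * ‖mApp D (mApp F⁻¹ (ξ ω))‖ ^ 2) := h3
      _ = K * ‖mApp D (mApp F⁻¹ (ξ ω))‖ ^ 2 := by rw [hK]; ring
  -- measurability of the first integrand
  have hAmeas : AEStronglyMeasurable
      (fun ω => ‖mApp Q (mApp F⁻¹ (ξ ω) + mApp F⁻¹ (gT (mApp F⁻¹ (ξ ω))))‖) P := by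
    have hc : Continuous (fun x : EuclideanSpace ℝ (Fin p) =>
        ‖mApp Q (mApp F⁻¹ x + mApp F⁻¹ (gT (mApp F⁻¹ x)))‖) :=
      ((mApp_cont Q).comp ((mApp_cont F⁻¹).add
        ((mApp_cont F⁻¹).comp (hgTc.comp (mApp_cont F⁻¹))))).norm
    exact (hc.measurable.comp hξm).aestronglyMeasurable
  have hAint : Integrable
      (fun ω => ‖mApp Q (mApp F⁻¹ (ξ ω) + mApp F⁻¹ (gT (mApp F⁻¹ (ξ ω))))‖) P := by
    refine Integrable.mono' (hBint.add hKgint) hAmeas (ae_of_all _ fun ω => ?_)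
    rw [Real.norm_eq_abs, abs_of_nonneg (norm_nonneg _)]
    have := hptw ω
    have h4 := abs_le.mp this
    simp only [Pi.add_apply]
    linarith [h4.2]
  -- put things together
  have hAr := hAint.restrict (s := S)
  have hBr := hBint.restrict (s := S)
  have hKgr := hKgint.restrict (s := S)
  rw [← integral_sub hAr hBr]
  calc |∫ ω in S, (‖mApp Q (mApp F⁻¹ (ξ ω) + mApp F⁻¹ (gT (mApp F⁻¹ (ξ ω))))‖ -
          ‖mApp Q (mApp F⁻¹ (ξ ω))‖) ∂P|
      ≤ ∫ ω in S, |‖mApp Q (mApp F⁻¹ (ξ ω) + mApp F⁻¹ (gT (mApp F⁻¹ (ξ ω))))‖ -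
          ‖mApp Q (mApp F⁻¹ (ξ ω))‖| ∂P := by
        simpa [Real.norm_eq_abs] using
          norm_integral_le_integral_norm (μ := P.restrict S)
            (f := fun ω => ‖mApp Q (mApp F⁻¹ (ξ ω) + mApp F⁻¹ (gT (mApp F⁻¹ (ξ ω))))‖ -
              ‖mApp Q (mApp F⁻¹ (ξ ω))‖)
    _ ≤ ∫ ω in S, K * ‖mApp D (mApp F⁻¹ (ξ ω))‖ ^ 2 ∂P :=
        integral_mono ((hAr.sub hBr).abs) hKgr (fun ω => hptw ω)
    _ ≤ ∫ ω, K * ‖mApp D (mApp F⁻¹ (ξ ω))‖ ^ 2 ∂P :=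
        setIntegral_le_integral hKgint (ae_of_all _ fun ω => by positivity)
    _ = K * aD := by rw [integral_const_mul, haD]
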